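/- arXiv:1909.12102 — 5 statements merged into one kernel-verified Lean document; each statement's English description precedes it below -/
import Mathlib

section
/- For every even N ≥ 4 there exists a relation R_N ⊆ {0,…,N−1}^2 with exactly N elements such that the number of maximal general (axis-aligned rectangular) gap boxes of R_N is at least (N/2)·(N/2+1). -/
/-- A general (axis-aligned rectangular) box inside `{0,…,N−1}^2`:
a product of two integer intervals. -/
def GenBox (N : ℕ) (S : Set (ℕ × ℕ)) : Prop :=
  ∃ a b c e : ℕ, a ≤ b ∧ c ≤ e ∧ b < N ∧ e < N ∧ S = Set.Icc a b ×ˢ Set.Icc c e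

/-- The double staircase relation. -/
def staircase (M : ℕ) : Finset (ℕ × ℕ) :=
  ((Finset.range M).image fun i => (i, M - 1 - i)) ∪
  ((Finset.range M).image fun i => (M + i, 2 * M - 1 - i))

lemma mem_staircase {M : ℕ} {p : ℕ × ℕ} :
    p ∈ staircase M ↔ ∃ i, i < M ∧ (p = (i, M - 1 - i) ∨ p = (M + i, 2 * M - 1 - i)) := by
  simp only [staircase, Finset.mem_union, Finset.mem_image, Finset.mem_range]
  constructor
  · rintro (⟨i, hi, rfl⟩ | ⟨i, hi, rfl⟩)
    · exact ⟨i, hi, Or.inl rfl⟩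
    · exact ⟨i, hi, Or.inr rfl⟩
  · rintro ⟨i, hi, (rfl | rfl)⟩
    · exact Or.inl ⟨i, hi, rfl⟩
    · exact Or.inr ⟨i, hi, rfl⟩

lemma card_staircase (M : ℕ) : (staircase M).card = 2 * M := by
  rw [staircase, Finset.card_union_of_disjoint, Finset.card_image_of_injective,
    Finset.card_image_of_injective, Finset.card_range]
  · ring
  · intro i j h
    have := congrArg Prod.fst h
    simpa using this
  · intro i j h
    have := congrArg Prod.fst h
    simp only [Prod.fst] at this
    omega
  · simp only [Finset.disjoint_left, Finset.mem_image, Finset.mem_range]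
    rintro p ⟨i, hi, rfl⟩ ⟨j, hj, hp⟩
    have := congrArg Prod.fst hp
    simp only [Prod.fst] at this
    omega

/-- Any box with corner sums `M` and `3M-2` is a maximal gap box. -/
lemma maximal_box {M a b c e : ℕ} (hM : 2 ≤ M) (hac : a + c = M) (hbe : b + e = 3 * M - 2)
    (hab : a ≤ b) (hce : c ≤ e) (hb : b < 2 * M) (he : e < 2 * M) :
    GenBox (2 * M) (Set.Icc a b ×ˢ Set.Icc c e) ∧
    (∀ p ∈ (Set.Icc a b ×ˢ Set.Icc c e : Set (ℕ × ℕ)), p ∉ staircase M) ∧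
    ∀ S', GenBox (2 * M) S' → (∀ p ∈ S', p ∉ staircase M) →
      (Set.Icc a b ×ˢ Set.Icc c e : Set (ℕ × ℕ)) ⊆ S' →
      (Set.Icc a b ×ˢ Set.Icc c e : Set (ℕ × ℕ)) = S' := by
  refine ⟨⟨a, b, c, e, hab, hce, hb, he, rfl⟩, ?_, ?_⟩
  · rintro ⟨x, y⟩ ⟨hx, hy⟩ hmem
    simp only [Set.mem_Icc] at hx hy
    rcases mem_staircase.1 hmem with ⟨i, hi, h | h⟩ <;>
      · rw [Prod.ext_iff] at h
        simp only at h
        omega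
  · rintro S' ⟨a', b', c', e', hab', hce', hb', he', rfl⟩ hgap hsub
    have h1 : (a, c) ∈ (Set.Icc a' b' ×ˢ Set.Icc c' e' : Set (ℕ × ℕ)) :=
      hsub ⟨Set.mem_Icc.2 ⟨le_refl a, hab⟩, Set.mem_Icc.2 ⟨le_refl c, hce⟩⟩
    have h2 : (b, e) ∈ (Set.Icc a' b' ×ˢ Set.Icc c' e' : Set (ℕ × ℕ)) :=
      hsub ⟨Set.mem_Icc.2 ⟨hab, le_refl b⟩, Set.mem_Icc.2 ⟨hce, le_refl e⟩⟩
    simp only [Set.mem_prod, Set.mem_Icc] at h1 h2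
    -- claim 1 : a' + c' ≥ M
    have key1 : M ≤ a' + c' := by
      by_contra hcon
      push_neg at hcon
      set i := max a' (M - 1 - e') with hidef
      have hcase := max_choice a' (M - 1 - e')
      have hia : a' ≤ i := le_max_left _ _
      have hie : M - 1 - e' ≤ i := le_max_right _ _
      rw [← hidef] at hcase
      have hmem : (i, M - 1 - i) ∈ (Set.Icc a' b' ×ˢ Set.Icc c' e' : Set (ℕ × ℕ)) := by
        refine ⟨Set.mem_Icc.2 ⟨hia, ?_⟩, Set.mem_Icc.2 ⟨?_, ?_⟩⟩ <;> omega
      exact hgap _ hmem (mem_staircase.2 ⟨i, by omega, Or.inl rfl⟩)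
    -- claim 2 : b' + e' ≤ 3M - 2
    have key2 : b' + e' ≤ 3 * M - 2 := by
      by_contra hcon
      push_neg at hcon
      set x := max a' (3 * M - 1 - e') with hxdef
      have hcase := max_choice a' (3 * M - 1 - e')
      have hxa : a' ≤ x := le_max_left _ _
      have hxe : 3 * M - 1 - e' ≤ x := le_max_right _ _
      rw [← hxdef] at hcase
      have hxM : M ≤ x := by omega
      have hmem : (M + (x - M), 2 * M - 1 - (x - M)) ∈
          (Set.Icc a' b' ×ˢ Set.Icc c' e' : Set (ℕ × ℕ)) := by
        refine ⟨Set.mem_Icc.2 ⟨?_, ?_⟩, Set.mem_Icc.2 ⟨?_, ?_⟩⟩ <;> omega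
      exact hgap _ hmem (mem_staircase.2 ⟨x - M, by omega, Or.inr rfl⟩)
    have : a' = a ∧ c' = c ∧ b' = b ∧ e' = e := by omega
    obtain ⟨rfl, rfl, rfl, rfl⟩ := this
    rfl

/-- For every even `N ≥ 4` there is a relation `R ⊆ {0,…,N−1}^2` with exactly
`N` elements having at least `(N/2)·(N/2+1)` maximal general gap boxes. -/
theorem stmt7 (N : ℕ) (hN : 4 ≤ N) (hEven : Even N) :
    ∃ R : Finset (ℕ × ℕ), (∀ p ∈ R, p.1 < N ∧ p.2 < N) ∧ R.card = N ∧
      (N / 2) * (N / 2 + 1) ≤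
        {S : Set (ℕ × ℕ) | GenBox N S ∧ (∀ p ∈ S, p ∉ R) ∧
          ∀ S', GenBox N S' → (∀ p ∈ S', p ∉ R) → S ⊆ S' → S = S'}.ncard := by
  obtain ⟨M, rfl⟩ := hEven
  have hMM : M + M = 2 * M := by ring
  rw [hMM] at hN ⊢
  have hM : 2 ≤ M := by omega
  have hdiv : 2 * M / 2 = M := by omega
  rw [hdiv]
  refine ⟨staircase M, ?_, ?_, ?_⟩
  · intro p hp
    rcases mem_staircase.1 hp with ⟨i, hi, rfl | rfl⟩ <;> constructor <;> simp <;> omega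
  · exact card_staircase M
  · -- counting
    set T : Set (Set (ℕ × ℕ)) :=
      {S : Set (ℕ × ℕ) | GenBox (2*M) S ∧ (∀ p ∈ S, p ∉ staircase M) ∧
        ∀ S', GenBox (2*M) S' → (∀ p ∈ S', p ∉ staircase M) → S ⊆ S' → S = S'} with hT
    have hTfin : T.Finite := by
      have hgrid : (Set.Iio (2*M) ×ˢ Set.Iio (2*M) : Set (ℕ × ℕ)).Finite :=
        (Set.finite_Iio _).prod (Set.finite_Iio _)
      refine Set.Finite.subset hgrid.finite_subsets ?_
      rintro S ⟨⟨a, b, c, e, hab, hce, hb, he, rfl⟩, -, -⟩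
      rintro ⟨x, y⟩ ⟨hx, hy⟩
      simp only [Set.mem_Icc] at hx hy
      exact ⟨by simp; omega, by simp; omega⟩
    -- the injection
    set f : ℕ × ℕ → Set (ℕ × ℕ) := fun q =>
      Set.Icc q.1 (M - 1 + min q.1 1 + q.2) ×ˢ
      Set.Icc (M - q.1) (2 * M - 1 - min q.1 1 - q.2) with hf
    set s : Finset (ℕ × ℕ) := Finset.range (M + 1) ×ˢ Finset.range M with hs
    have hparams : ∀ q ∈ s, q.1 + (M - q.1) = M ∧
        (M - 1 + min q.1 1 + q.2) + (2 * M - 1 - min q.1 1 - q.2) = 3 * M - 2 ∧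
        q.1 ≤ M - 1 + min q.1 1 + q.2 ∧ (M - q.1) ≤ 2 * M - 1 - min q.1 1 - q.2 ∧
        M - 1 + min q.1 1 + q.2 < 2 * M ∧ 2 * M - 1 - min q.1 1 - q.2 < 2 * M := by
      rintro ⟨a, k⟩ hq
      simp only [hs, Finset.mem_product, Finset.mem_range] at hq
      have hmin : min a 1 = 0 ∧ a = 0 ∨ min a 1 = 1 ∧ 1 ≤ a := by
        rcases Nat.eq_zero_or_pos a with h | h
        · left; simp [h]
        · right; simp [Nat.min_eq_right h]; omega
      simp only
      omega
    have hmem : ∀ q ∈ s, f q ∈ T := by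
      intro q hq
      obtain ⟨p1, p2, p3, p4, p5, p6⟩ := hparams q hq
      obtain ⟨g1, g2, g3⟩ := maximal_box hM p1 p2 p3 p4 p5 p6
      exact ⟨g1, g2, g3⟩
    have hinj : Set.InjOn f ↑s := by
      rintro ⟨a, k⟩ hq ⟨a', k'⟩ hq' heq
      obtain ⟨p1, p2, p3, p4, p5, p6⟩ := hparams _ hq
      obtain ⟨q1, q2, q3, q4, q5, q6⟩ := hparams _ hq'
      simp only [hf] at heq
      have m1 : (a, M - a) ∈ Set.Icc a (M - 1 + min a 1 + k) ×ˢ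
          Set.Icc (M - a) (2 * M - 1 - min a 1 - k) :=
        ⟨Set.mem_Icc.2 ⟨le_refl _, p3⟩, Set.mem_Icc.2 ⟨le_refl _, p4⟩⟩
      have m1' : (a', M - a') ∈ Set.Icc a' (M - 1 + min a' 1 + k') ×ˢ
          Set.Icc (M - a') (2 * M - 1 - min a' 1 - k') :=
        ⟨Set.mem_Icc.2 ⟨le_refl _, q3⟩, Set.mem_Icc.2 ⟨le_refl _, q4⟩⟩
      rw [heq] at m1
      rw [← heq] at m1'
      simp only [Set.mem_prod, Set.mem_Icc] at m1 m1'
      simp only [hs, Finset.coe_product, Set.mem_prod, Finset.mem_coe, Finset.mem_range] at hq hq'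
      have haa : a = a' := by omega
      subst haa
      have m2 : (M - 1 + min a 1 + k, M - a) ∈ Set.Icc a (M - 1 + min a 1 + k) ×ˢ
          Set.Icc (M - a) (2 * M - 1 - min a 1 - k) :=
        ⟨Set.mem_Icc.2 ⟨p3, le_refl _⟩, Set.mem_Icc.2 ⟨le_refl _, p4⟩⟩
      have m2' : (M - 1 + min a 1 + k', M - a) ∈ Set.Icc a (M - 1 + min a 1 + k') ×ˢ
          Set.Icc (M - a) (2 * M - 1 - min a 1 - k') :=
        ⟨Set.mem_Icc.2 ⟨q3, le_refl _⟩, Set.mem_Icc.2 ⟨le_refl _, q4⟩⟩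
      rw [heq] at m2
      rw [← heq] at m2'
      simp only [Set.mem_prod, Set.mem_Icc] at m2 m2'
      have : k = k' := by omega
      rw [this]
    calc M * (M + 1) = s.card := by
          simp [hs, Finset.card_product]; ring
      _ = (f '' ↑s).ncard := by rw [Set.ncard_image_of_injOn hinj, Set.ncard_coe_finset]
      _ ≤ T.ncard := by
          refine Set.ncard_le_ncard ?_ hTfin
          rintro S ⟨q, hq, rfl⟩
          exact hmem q hq
end

section
/- Let Q be a join query over attributes with finite linearly ordered domains, let σ be a domain ordering, and let B be a box cover for σ(Q) consisting of K gap boxes for the relations of Q. Fix an attribute A. Define a ∼ a' for a, a' ∈ dom(A) if for every relation R containing A, the A-hyperplanes H(R,A,a) and H(R,A,a') are equal. Then the number of equivalence classes of ∼ on dom(A) is at most 2K + 1. -/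
/-- A join query over attribute set `𝒜` with attribute domains `D`: `m`
relations, the `i`-th over attribute set `attr i`.  A relation is represented
as a cylinder set of full tuples: membership only depends on the coordinates
in `attr i`. -/
structure Query (𝒜 : Type) (D : 𝒜 → Type) where
  m : ℕ
  attr : Fin m → Set 𝒜
  Rel : Fin m → Set (∀ a, D a)
  cyl : ∀ (i) (t t' : ∀ a, D a), (∀ a ∈ attr i, t a = t' a) → (t ∈ Rel i ↔ t' ∈ Rel i)

variable {𝒜 : Type} {D : 𝒜 → Type}

/-- `B` is an axis-aligned box over the attributes in `S`, with respect to the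
domain ordering `σ` (each `σ a` embeds `D a` into a linear order): a product of
intervals over the attributes in `S`, unconstrained (full domain) elsewhere. -/
def IsBoxWrt (σ : ∀ a, D a → ℕ) (S : Set 𝒜) (B : Set (∀ a, D a)) : Prop :=
  ∃ lo hi : 𝒜 → ℕ,
    B = {t | ∀ a ∈ S, lo a ≤ σ a (t a) ∧ σ a (t a) ≤ hi a}

/-- `𝓑` is a box cover of `Q` with respect to the domain ordering `σ`: the
boxes assigned to relation `i` are gap boxes of `Rel i` whose union is the
complement of `Rel i`. -/
def IsCover (Q : Query 𝒜 D) (σ : ∀ a, D a → ℕ)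
    (𝓑 : Fin Q.m → Set (Set (∀ a, D a))) : Prop :=
  ∀ i, (∀ b ∈ 𝓑 i, IsBoxWrt σ (Q.attr i) b ∧ b ∩ Q.Rel i = ∅) ∧
    ⋃₀ 𝓑 i = (Q.Rel i)ᶜ

/-- `a ∼ a'` on `dom A`: for every relation containing `A`, the
`A`-hyperplanes (slices) of `a` and `a'` coincide. -/
def HyperEq [DecidableEq 𝒜] (Q : Query 𝒜 D) (A : 𝒜) (a a' : D A) : Prop :=
  ∀ i, A ∈ Q.attr i → ∀ t : ∀ x, D x,
    (Function.update t A a ∈ Q.Rel i ↔ Function.update t A a' ∈ Q.Rel i)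

/-- `p` is the immediate `τ`-predecessor of `a`. -/
def PredOf {α : Type*} (τ : α → ℕ) (p a : α) : Prop :=
  τ p < τ a ∧ ∀ c, τ c < τ a → τ c ≤ τ p

/-- The number of values of `E` is at most one more than the number of
"switch points": elements whose immediate predecessor has a different value. -/
lemma aux_classes {α : Type*} [Fintype α] [Nonempty α] {β : Type*}
    (τ : α → ℕ) (hτ : Function.Injective τ) (E : α → β) :
    (Set.range E).ncard ≤ {a | ∃ p, PredOf τ p a ∧ E p ≠ E a}.ncard + 1 := by
  classical
  set S := {a | ∃ p, PredOf τ p a ∧ E p ≠ E a} with hS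
  obtain ⟨amin, -, hamin⟩ := Finset.exists_min_image Finset.univ τ Finset.univ_nonempty
  have hsub : Set.range E ⊆ insert (E amin) (E '' S) := by
    rintro _ ⟨a, rfl⟩
    by_cases hA : E a = E amin
    · exact hA ▸ Set.mem_insert _ _
    · right
      set C := Finset.univ.filter (fun x => E x = E a) with hC
      have haC : a ∈ C := by simp [hC]
      obtain ⟨s, hsC, hsmin⟩ := Finset.exists_min_image C τ ⟨a, haC⟩
      have hsE : E s = E a := by simpa [hC] using hsC
      have hsne : s ≠ amin := by rintro rfl; exact hA hsE.symm
      have hlt : τ amin < τ s :=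
        lt_of_le_of_ne (hamin s (Finset.mem_univ s)) (fun h => hsne (hτ h.symm))
      set B := Finset.univ.filter (fun c => τ c < τ s) with hB
      obtain ⟨p, hpB, hpmax⟩ := Finset.exists_max_image B τ ⟨amin, by simp [hB, hlt]⟩
      have hplt : τ p < τ s := by simpa [hB] using hpB
      have hpe : E p ≠ E s := by
        intro h
        have hpC : p ∈ C := by simp [hC, h.trans hsE]
        exact absurd (hsmin p hpC) (not_le.mpr hplt)
      exact ⟨s, ⟨p, ⟨hplt, fun c hc => hpmax c (by simp [hB, hc])⟩, hpe⟩, hsE⟩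
  calc (Set.range E).ncard ≤ (insert (E amin) (E '' S)).ncard :=
        Set.ncard_le_ncard hsub ((S.toFinite.image E).insert _)
    _ ≤ (E '' S).ncard + 1 := Set.ncard_insert_le _ _
    _ ≤ S.ncard + 1 := by
        have := Set.ncard_image_le (f := E) S.toFinite
        omega

/-- The number of equivalence classes of `∼` on `dom A` is at most `2K + 1`,
where `K` is the total size of a box cover `𝓑` for `Q` under the ordering `σ`. -/
theorem stmt8 [DecidableEq 𝒜] [∀ a, Fintype (D a)] (Q : Query 𝒜 D)
    (σ : ∀ a, D a → ℕ) (hσ : ∀ a, Function.Injective (σ a))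
    (𝓑 : Fin Q.m → Set (Set (∀ a, D a))) (hcov : IsCover Q σ 𝓑)
    (hfin : ∀ i, (𝓑 i).Finite) (K : ℕ) (hK : ∑ i, (𝓑 i).ncard = K) (A : 𝒜) :
    (Set.range fun a : D A => {a' | HyperEq Q A a a'}).ncard ≤ 2 * K + 1 := by
  classical
  rcases isEmpty_or_nonempty (D A) with h | h
  · rw [Set.range_eq_empty]
    simp
  set E : D A → Set (D A) := fun a => {a' | HyperEq Q A a a'} with hE
  -- equivalent elements have the same class
  have hEeq : ∀ p a : D A, HyperEq Q A p a → E p = E a := by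
    intro p a hpa
    ext x
    simp only [hE, Set.mem_setOf_eq]
    constructor
    · intro hpx i hi t
      exact (hpa i hi t).symm.trans (hpx i hi t)
    · intro hax i hi t
      exact (hpa i hi t).trans (hax i hi t)
  set S := {a : D A | ∃ p, PredOf (σ A) p a ∧ E p ≠ E a} with hS
  -- fixed interval endpoints for each (relation, box) pair
  have hbox' : ∀ (i : Fin Q.m) (b : Set (∀ a, D a)), ∃ l h : 𝒜 → ℕ,
      b ∈ 𝓑 i → b = {t | ∀ x ∈ Q.attr i, l x ≤ σ x (t x) ∧ σ x (t x) ≤ h x} := by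
    intro i b
    by_cases hb : b ∈ 𝓑 i
    · obtain ⟨l, hh, he⟩ := ((hcov i).1 b hb).1
      exact ⟨l, hh, fun _ => he⟩
    · exact ⟨fun _ => 0, fun _ => 0, fun h' => absurd h' hb⟩
  choose lo hi hspec using hbox'
  -- the key combinatorial step: every switch point points to a box face
  have key : ∀ a ∈ S, ∃ z : (Σ _ : Fin Q.m, Set (∀ x, D x)) × Bool,
      z.1.2 ∈ 𝓑 z.1.1 ∧ ∃ p, PredOf (σ A) p a ∧
        ((z.2 = true → σ A p ≤ hi z.1.1 z.1.2 A ∧ hi z.1.1 z.1.2 A < σ A a) ∧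
         (z.2 = false → σ A p < lo z.1.1 z.1.2 A ∧ lo z.1.1 z.1.2 A ≤ σ A a)) := by
    intro a ha
    obtain ⟨p, hpred, hEne⟩ := ha
    have hne : ¬ HyperEq Q A p a := fun h => hEne (hEeq p a h)
    simp only [HyperEq, not_forall] at hne
    obtain ⟨i, hAi, t, hniff⟩ := hne
    by_cases hu : Function.update t A p ∈ Q.Rel i
    · -- `a`-slice misses the relation: it lies in a box whose `lo A` separates
      have hv : Function.update t A a ∉ Q.Rel i :=
        fun hv => hniff (iff_of_true hu hv)
      have hv' : Function.update t A a ∈ ⋃₀ 𝓑 i := by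
        rw [(hcov i).2]; exact hv
      obtain ⟨b, hb, hvb⟩ := hv'
      have hbspec := hspec i b hb
      rw [hbspec] at hvb
      have hvA : lo i b A ≤ σ A a ∧ σ A a ≤ hi i b A := by
        have := hvb A hAi
        rwa [Function.update_self] at this
      have hpA : ¬ (lo i b A ≤ σ A p ∧ σ A p ≤ hi i b A) := by
        intro hcon
        have hub : Function.update t A p ∈ b := by
          rw [hbspec]
          intro x hx
          by_cases hxA : x = A
          · subst hxA; rwa [Function.update_self]
          · rw [Function.update_of_ne hxA]
            have := hvb x hx
            rwa [Function.update_of_ne hxA] at this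
        have : Function.update t A p ∈ b ∩ Q.Rel i := ⟨hub, hu⟩
        rw [((hcov i).1 b hb).2] at this
        exact this
      have hple : σ A p ≤ hi i b A := le_of_lt (lt_of_lt_of_le hpred.1 hvA.2)
      have hplo : σ A p < lo i b A := by
        by_contra hcc
        exact hpA ⟨le_of_not_gt hcc, hple⟩
      exact ⟨(⟨i, b⟩, false), hb, p, hpred,
        ⟨fun hcon => by simp at hcon, fun _ => ⟨hplo, hvA.1⟩⟩⟩
    · -- `p`-slice misses the relation: it lies in a box whose `hi A` separates
      have hv : Function.update t A a ∈ Q.Rel i := by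
        by_contra hv
        exact hniff (iff_of_false hu hv)
      have hu' : Function.update t A p ∈ ⋃₀ 𝓑 i := by
        rw [(hcov i).2]; exact hu
      obtain ⟨b, hb, hub⟩ := hu'
      have hbspec := hspec i b hb
      rw [hbspec] at hub
      have hpA : lo i b A ≤ σ A p ∧ σ A p ≤ hi i b A := by
        have := hub A hAi
        rwa [Function.update_self] at this
      have hvA : ¬ (lo i b A ≤ σ A a ∧ σ A a ≤ hi i b A) := by
        intro hcon
        have hvb : Function.update t A a ∈ b := by
          rw [hbspec]
          intro x hx
          by_cases hxA : x = A
          · subst hxA; rwa [Function.update_self]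
          · rw [Function.update_of_ne hxA]
            have := hub x hx
            rwa [Function.update_of_ne hxA] at this
        have : Function.update t A a ∈ b ∩ Q.Rel i := ⟨hvb, hv⟩
        rw [((hcov i).1 b hb).2] at this
        exact this
      have halo : lo i b A ≤ σ A a := le_of_lt (lt_of_le_of_lt hpA.1 hpred.1)
      have hahi : hi i b A < σ A a := by
        by_contra hcc
        exact hvA ⟨halo, le_of_not_gt hcc⟩
      exact ⟨(⟨i, b⟩, true), hb, p, hpred,
        ⟨fun _ => ⟨hpA.2, hahi⟩, fun hcon => by simp at hcon⟩⟩
  -- package as a total function into `Option`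
  have key' : ∀ a : D A, ∃ z : Option ((Σ _ : Fin Q.m, Set (∀ x, D x)) × Bool),
      a ∈ S → ∃ w, z = some w ∧ (w.1.2 ∈ 𝓑 w.1.1 ∧ ∃ p, PredOf (σ A) p a ∧
        ((w.2 = true → σ A p ≤ hi w.1.1 w.1.2 A ∧ hi w.1.1 w.1.2 A < σ A a) ∧
         (w.2 = false → σ A p < lo w.1.1 w.1.2 A ∧ lo w.1.1 w.1.2 A ≤ σ A a))) := by
    intro a
    by_cases ha : a ∈ S
    · obtain ⟨w, hw⟩ := key a ha
      exact ⟨some w, fun _ => ⟨w, rfl, hw⟩⟩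
    · exact ⟨none, fun h => absurd h ha⟩
  choose z hz using key'
  -- the target finset of (relation, box) pairs
  set P : Finset ((Σ _ : Fin Q.m, Set (∀ x, D x))) :=
    Finset.univ.sigma (fun i => (hfin i).toFinset) with hP
  set T : Finset ((Σ _ : Fin Q.m, Set (∀ x, D x)) × Bool) := P ×ˢ Finset.univ with hT
  set Tset : Set ((Σ _ : Fin Q.m, Set (∀ x, D x)) × Bool) := ↑T with hTset
  have hmaps : ∀ a ∈ S, z a ∈ some '' Tset := by
    intro a ha
    obtain ⟨w, hzw, hwb, -⟩ := hz a ha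
    refine ⟨w, ?_, hzw.symm⟩
    simp only [hTset, hT, Finset.coe_product, Set.mem_prod, hP, Finset.mem_coe,
      Finset.mem_sigma, Finset.mem_univ, true_and, Set.Finite.mem_toFinset, and_true]
    exact hwb
  have hinj : Set.InjOn z S := by
    intro a1 ha1 a2 ha2 heq
    obtain ⟨w1, hzw1, -, p1, hp1, hw1⟩ := hz a1 ha1
    obtain ⟨w2, hzw2, -, p2, hp2, hw2⟩ := hz a2 ha2
    rw [hzw1, hzw2] at heq
    have hww : w1 = w2 := Option.some_injective _ heq
    subst hww
    by_contra hne
    have hτne : σ A a1 ≠ σ A a2 := fun h => hne (hσ A h)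
    rcases lt_or_gt_of_ne hτne with hlt | hlt
    · -- σ A a1 < σ A a2
      have h12 : σ A a1 ≤ σ A p2 := hp2.2 a1 hlt
      cases hb : w1.2 with
      | true =>
        have h1 := (hw1.1 hb).2
        have h2 := (hw2.1 hb).1
        omega
      | false =>
        have h1 := (hw1.2 hb).2
        have h2 := (hw2.2 hb).1
        omega
    · have h21 : σ A a2 ≤ σ A p1 := hp1.2 a2 hlt
      cases hb : w1.2 with
      | true =>
        have h1 := (hw2.1 hb).2
        have h2 := (hw1.1 hb).1
        omega
      | false =>
        have h1 := (hw2.2 hb).2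
        have h2 := (hw1.2 hb).1
        omega
  have hScard : S.ncard ≤ 2 * K := by
    have h1 : S.ncard ≤ (some '' Tset).ncard :=
      Set.ncard_le_ncard_of_injOn z hmaps hinj (Tset.toFinite.image some)
    have h2 : (some '' Tset).ncard = T.card := by
      rw [Set.ncard_image_of_injective _ (Option.some_injective _), Set.ncard_coe_finset]
    have h3 : T.card = P.card * 2 := by
      rw [hT, Finset.card_product]
      simp
    have h4 : P.card = K := by
      rw [hP, Finset.card_sigma, ← hK]
      refine Finset.sum_congr rfl (fun i _ => ?_)
      exact (Set.ncard_eq_toFinset_card _ (hfin i)).symm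
    omega
  have hmain := aux_classes (σ A) (hσ A) E
  calc (Set.range E).ncard ≤ S.ncard + 1 := hmain
    _ ≤ 2 * K + 1 := by omega
end

section
/- Let R be a finite subset of D_1 × ⋯ × D_n, where each D_i is linearly ordered and partitioned into at most h_i consecutive runs of values with identical slices (hyperplanes) in R. Then the complement of R in D_1 × ⋯ × D_n can be written as a union of at most h_1 · h_2 ⋯ h_n axis-aligned boxes (products of intervals) each disjoint from R. -/
/-- Values `a, a'` of the `i`-th domain have identical slices (hyperplanes) in
`R`. -/
def sameSlice {n : ℕ} {D : Fin n → Type} (R : Set (∀ i, D i)) (i : Fin n)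
    (a a' : D i) : Prop :=
  ∀ t : ∀ j, D j, Function.update t i a ∈ R ↔ Function.update t i a' ∈ R

lemma key_sameSlice {n : ℕ} {D : Fin n → Type} (R : Set (∀ i, D i))
    (t t' : ∀ i, D i) (hss : ∀ i, sameSlice R i (t i) (t' i)) :
    t ∈ R ↔ t' ∈ R := by
  classical
  have hg : ∀ k : ℕ,
      ((fun (i : Fin n) => if (i : ℕ) < k then t' i else t i) ∈ R) ↔ t ∈ R := by
    intro k
    induction k with
    | zero => simp
    | succ k ih =>
      rw [← ih]
      by_cases hk : k < n
      · set g : ∀ i, D i := fun (i : Fin n) => if (i : ℕ) < k then t' i else t i with hgdef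
        have h1 : (fun (i : Fin n) => if (i : ℕ) < k + 1 then t' i else t i)
            = Function.update g ⟨k, hk⟩ (t' ⟨k, hk⟩) := by
          funext i
          rcases eq_or_ne i ⟨k, hk⟩ with rfl | hne
          · simp [Function.update_self]
          · have hik : (i : ℕ) ≠ k := fun hh => hne (Fin.ext hh)
            rw [Function.update_of_ne hne]
            show (if (i : ℕ) < k + 1 then t' i else t i) = g i
            have : ((i : ℕ) < k + 1) ↔ ((i : ℕ) < k) := by omega
            simp only [hgdef, this]
        have h2 : Function.update g ⟨k, hk⟩ (t ⟨k, hk⟩) = g := by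
          have hgk : g ⟨k, hk⟩ = t ⟨k, hk⟩ := by simp [hgdef]
          rw [← hgk]; exact Function.update_eq_self _ _
        show (fun (i : Fin n) => if (i : ℕ) < k + 1 then t' i else t i) ∈ R ↔ g ∈ R
        rw [h1, ← (hss ⟨k, hk⟩ g), h2]
      · have heq : (fun (i : Fin n) => if (i : ℕ) < k + 1 then t' i else t i)
            = fun (i : Fin n) => if (i : ℕ) < k then t' i else t i := by
          funext i
          have h1 : (i : ℕ) < k := lt_of_lt_of_le i.isLt (le_of_not_gt hk)
          simp [h1, Nat.lt_succ_of_lt h1]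
        rw [heq]
  have hfin := hg n
  have : (fun (i : Fin n) => if (i : ℕ) < n then t' i else t i) = t' := by
    funext i; simp [i.isLt]
  rw [this] at hfin
  exact hfin.symm

/-- If each domain `D i` is partitioned into at most `h i` consecutive runs
(order-connected sets) of values with identical slices in `R`, then the
complement of `R` is a union of at most `h 1 · ⋯ · h n` axis-aligned boxes
(products of order-connected intervals), each disjoint from `R`. -/
theorem stmt10 {n : ℕ} {D : Fin n → Type} [∀ i, LinearOrder (D i)]
    (R : Set (∀ i, D i)) (hRfin : R.Finite) (h : Fin n → ℕ)
    (P : ∀ i, Set (Set (D i)))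
    (hPfin : ∀ i, (P i).Finite) (hPcard : ∀ i, (P i).ncard ≤ h i)
    (hconn : ∀ i, ∀ S ∈ P i, S.OrdConnected)
    (hslice : ∀ i, ∀ S ∈ P i, ∀ a ∈ S, ∀ a' ∈ S, sameSlice R i a a')
    (hcover : ∀ i, ⋃₀ P i = Set.univ)
    (hdisj : ∀ i, ∀ S ∈ P i, ∀ S' ∈ P i, S ≠ S' → S ∩ S' = ∅) :
    ∃ F : Set (Set (∀ i, D i)), F.Finite ∧ F.ncard ≤ ∏ i, h i ∧
      (∀ b ∈ F,
        (∃ I : ∀ i, Set (D i), (∀ i, (I i).OrdConnected) ∧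
          b = {t | ∀ i, t i ∈ I i}) ∧ b ∩ R = ∅) ∧
      ⋃₀ F = Rᶜ := by
  classical
  haveI hFin : ∀ i, Finite (P i) := fun i => (hPfin i).to_subtype
  set f : (∀ i, P i) → Set (∀ i, D i) :=
    fun S => {t | ∀ i, t i ∈ (S i : Set (D i))} with hf
  refine ⟨{b | b ∈ Set.range f ∧ b ∩ R = ∅}, ?_, ?_, ?_, ?_⟩
  · exact (Set.finite_range f).subset (fun b hb => hb.1)
  · calc {b | b ∈ Set.range f ∧ b ∩ R = ∅}.ncard
        ≤ (Set.range f).ncard :=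
          Set.ncard_le_ncard (fun b hb => hb.1) (Set.finite_range f)
      _ ≤ (Set.univ : Set (∀ i, P i)).ncard := by
          rw [← Set.image_univ]
          exact Set.ncard_image_le Set.finite_univ
      _ = Nat.card (∀ i, P i) := Set.ncard_univ _
      _ = ∏ i, Nat.card (P i) := Nat.card_pi
      _ = ∏ i, (P i).ncard := by
          refine Finset.prod_congr rfl fun i _ => ?_
          exact (Nat.card_coe_set_eq (P i))
      _ ≤ ∏ i, h i :=
          Finset.prod_le_prod' fun i _ => hPcard i
  · rintro b ⟨⟨S, rfl⟩, hbR⟩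
    exact ⟨⟨fun i => (S i : Set (D i)),
      fun i => hconn i _ (S i).2, rfl⟩, hbR⟩
  · ext t
    constructor
    · rintro ⟨b, ⟨_, hbR⟩, htb⟩
      intro htR
      exact Set.eq_empty_iff_forall_notMem.mp hbR t ⟨htb, htR⟩
    · intro htR
      have hchoose : ∀ i, ∃ A ∈ P i, t i ∈ A := by
        intro i
        have : t i ∈ ⋃₀ P i := by rw [hcover i]; trivial
        exact this
      choose A hA htA using hchoose
      refine ⟨f (fun i => ⟨A i, hA i⟩), ⟨⟨_, rfl⟩, ?_⟩, fun i => htA i⟩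
      ext t'
      simp only [Set.mem_inter_iff, Set.mem_empty_iff_false, iff_false, not_and]
      intro ht'b ht'R
      have hss : ∀ i, sameSlice R i (t' i) (t i) :=
        fun i => hslice i (A i) (hA i) (t' i) (ht'b i) (t i) (htA i)
      exact htR ((key_sameSlice R t' t hss).mp ht'R)
end

section
/- Combining the previous two facts: if Q is a query over relations of maximum arity r and there exists a domain ordering σ* under which Q has a box cover of size K, then under any domain ordering σ that, for each attribute A, places each equivalence class of ∼_A (equality of all A-hyperplanes across all relations containing A) in a single consecutive run, each relation R of arity n_R has a box cover of size at most (2K+1)^{n_R}, and hence Q has a box cover of total size at most m(2K+1)^r, where m is the number of relations. -/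
variable {𝒜 : Type} {D : 𝒜 → Type}

section helpers
variable [DecidableEq 𝒜] (Q : Query 𝒜 D)

theorem hyperEq_refl (A : 𝒜) (a : D A) : HyperEq Q A a a := fun _ _ _ => Iff.rfl

theorem hyperEq_symm {A : 𝒜} {a a' : D A} (h : HyperEq Q A a a') : HyperEq Q A a' a :=
  fun i hi t => (h i hi t).symm

theorem hyperEq_trans {A : 𝒜} {a a' a'' : D A} (h1 : HyperEq Q A a a')
    (h2 : HyperEq Q A a' a'') : HyperEq Q A a a'' :=
  fun i hi t => (h1 i hi t).trans (h2 i hi t)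

theorem rel_iff_of_hyperEq (i : Fin Q.m) (S : Finset 𝒜) :
    ∀ (t t' : ∀ a, D a), (∀ A ∈ S, HyperEq Q A (t A) (t' A)) →
    (∀ A ∈ Q.attr i, A ∉ S → t A = t' A) →
    (t ∈ Q.Rel i ↔ t' ∈ Q.Rel i) := by
  classical
  induction S using Finset.induction_on with
  | empty =>
    intro t t' _ h2
    exact Q.cyl i t t' (fun a ha => h2 a ha (by simp))
  | @insert A S hA ih =>
    intro t t' h1 h2
    set t'' := Function.update t A (t' A) with ht''
    have step1 : t ∈ Q.Rel i ↔ t'' ∈ Q.Rel i := by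
      by_cases hmem : A ∈ Q.attr i
      · have := h1 A (Finset.mem_insert_self A S) i hmem t
        rwa [Function.update_eq_self] at this
      · refine Q.cyl i t t'' (fun a ha => ?_)
        rw [ht'', Function.update_of_ne (by rintro rfl; exact hmem ha)]
    refine step1.trans (ih t'' t' ?_ ?_)
    · intro B hB
      have hBA : B ≠ A := fun h => hA (h ▸ hB)
      rw [ht'', Function.update_of_ne hBA]
      exact h1 B (Finset.mem_insert_of_mem hB)
    · intro B hB hBS
      by_cases hBA : B = A
      · subst hBA; rw [ht'', Function.update_self]
      · rw [ht'', Function.update_of_ne hBA]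
        exact h2 B hB (by simp [hBA, hBS])

theorem class_count (K : ℕ)
    (σ' : ∀ a, D a → ℕ) (𝓑' : Fin Q.m → Set (Set (∀ a, D a)))
    (hcov : IsCover Q σ' 𝓑') (hfin : ∀ i, (𝓑' i).Finite)
    (hK : ∑ i, (𝓑' i).ncard = K) :
    ∃ f : ∀ A, D A → Fin (2 * K + 1),
      ∀ A a a', f A a = f A a' → HyperEq Q A a a' := by
  classical
  set ℬ : Finset (Fin Q.m × Set (∀ a, D a)) :=
    Finset.univ.biUnion (fun i => (hfin i).toFinset.image (fun b => (i, b))) with hℬ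
  have memℬ : ∀ p, p ∈ ℬ ↔ p.2 ∈ 𝓑' p.1 := by
    rintro ⟨i, b⟩
    simp only [hℬ, Finset.mem_biUnion, Finset.mem_univ, true_and, Finset.mem_image,
      Set.Finite.mem_toFinset, Prod.mk.injEq]
    constructor
    · rintro ⟨j, c, hc, rfl, rfl⟩; exact hc
    · intro h; exact ⟨i, b, h, rfl, rfl⟩
  have hcard : ℬ.card = K := by
    rw [hℬ, Finset.card_biUnion]
    · rw [← hK]
      refine Finset.sum_congr rfl fun i _ => ?_
      rw [Finset.card_image_of_injective _ (fun b c h => (Prod.mk.injEq _ _ _ _ ▸ h).2),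
        Set.ncard_eq_toFinset_card _ (hfin i)]
    · intro i _ j _ hij
      simp only [Finset.disjoint_left, Finset.mem_image, Set.Finite.mem_toFinset]
      rintro p ⟨b, hb, rfl⟩ ⟨c, hc, h⟩
      exact hij ((Prod.mk.injEq _ _ _ _ ▸ h).1.symm)
  -- box data
  set P : (Fin Q.m × Set (∀ a, D a)) → Prop := fun p => ∃ lo hi : 𝒜 → ℕ,
    p.2 = {t | ∀ x ∈ Q.attr p.1, lo x ≤ σ' x (t x) ∧ σ' x (t x) ≤ hi x} with hP
  have hPall : ∀ p ∈ ℬ, P p := fun p hp => ((hcov p.1).1 p.2 ((memℬ p).1 hp)).1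
  set lop : (Fin Q.m × Set (∀ a, D a)) → 𝒜 → ℕ :=
    fun p => if h : P p then h.choose else fun _ => 0 with hlop
  set hip : (Fin Q.m × Set (∀ a, D a)) → 𝒜 → ℕ :=
    fun p => if h : P p then h.choose_spec.choose else fun _ => 0 with hhip
  have hbox : ∀ p ∈ ℬ, p.2 =
      {t | ∀ x ∈ Q.attr p.1, lop p x ≤ σ' x (t x) ∧ σ' x (t x) ≤ hip p x} := by
    intro p hp
    have h := hPall p hp
    rw [hlop, hhip]
    simp only [dif_pos h]
    exact h.choose_spec.choose_spec
  set g : ∀ A : 𝒜, ℕ → ℕ := fun A x =>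
    ((ℬ.filter (fun p => A ∈ Q.attr p.1)).filter (fun p => lop p A ≤ x)).card +
    ((ℬ.filter (fun p => A ∈ Q.attr p.1)).filter (fun p => hip p A < x)).card with hg
  have hgle : ∀ A x, g A x ≤ 2 * K := by
    intro A x
    have h1 := Finset.card_le_card (Finset.filter_subset (fun p => lop p A ≤ x)
      (ℬ.filter (fun p => A ∈ Q.attr p.1)))
    have h2 := Finset.card_le_card (Finset.filter_subset (fun p => hip p A < x)
      (ℬ.filter (fun p => A ∈ Q.attr p.1)))
    have h3 := Finset.card_le_card (Finset.filter_subset (fun p => A ∈ Q.attr p.1) ℬ)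
    rw [hg]; simp only; omega
  have key : ∀ A x y, x ≤ y → g A x = g A y → ∀ p ∈ ℬ, A ∈ Q.attr p.1 →
      ((lop p A ≤ x ∧ x ≤ hip p A) ↔ (lop p A ≤ y ∧ y ≤ hip p A)) := by
    intro A x y hxy hgeq p hp hA
    set s := ℬ.filter (fun p => A ∈ Q.attr p.1) with hs
    have sub1 : s.filter (fun p => lop p A ≤ x) ⊆ s.filter (fun p => lop p A ≤ y) :=
      Finset.monotone_filter_right s (fun p _ h => le_trans h hxy)
    have sub2 : s.filter (fun p => hip p A < x) ⊆ s.filter (fun p => hip p A < y) :=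
      Finset.monotone_filter_right s (fun p _ h => lt_of_lt_of_le h hxy)
    have c1 := Finset.card_le_card sub1
    have c2 := Finset.card_le_card sub2
    rw [hg] at hgeq; simp only at hgeq; rw [← hs] at hgeq
    have e1 : s.filter (fun p => lop p A ≤ x) = s.filter (fun p => lop p A ≤ y) :=
      Finset.eq_of_subset_of_card_le sub1 (by omega)
    have e2 : s.filter (fun p => hip p A < x) = s.filter (fun p => hip p A < y) :=
      Finset.eq_of_subset_of_card_le sub2 (by omega)
    have hps : p ∈ s := Finset.mem_filter.mpr ⟨hp, hA⟩
    have i1 : lop p A ≤ x ↔ lop p A ≤ y := by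
      have hx' : p ∈ s.filter (fun p => lop p A ≤ x) ↔ p ∈ s.filter (fun p => lop p A ≤ y) := by
        rw [e1]
      simpa only [Finset.mem_filter, hps, true_and] using hx'
    have i2 : hip p A < x ↔ hip p A < y := by
      have hx' : p ∈ s.filter (fun p => hip p A < x) ↔ p ∈ s.filter (fun p => hip p A < y) := by
        rw [e2]
      simpa only [Finset.mem_filter, hps, true_and] using hx'
    omega
  have key' : ∀ A x y, g A x = g A y → ∀ p ∈ ℬ, A ∈ Q.attr p.1 →
      ((lop p A ≤ x ∧ x ≤ hip p A) ↔ (lop p A ≤ y ∧ y ≤ hip p A)) := by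
    intro A x y hgeq p hp hA
    rcases le_total x y with h | h
    · exact key A x y h hgeq p hp hA
    · exact (key A y x h hgeq.symm p hp hA).symm
  refine ⟨fun A a => ⟨g A (σ' A a), by have := hgle A (σ' A a); omega⟩, ?_⟩
  intro A a a' hfe
  have hge : g A (σ' A a) = g A (σ' A a') := congrArg Fin.val hfe
  intro j hAj t
  have hRel : ∀ (x : ∀ a, D a), x ∈ Q.Rel j ↔ ∀ b ∈ 𝓑' j, x ∉ b := by
    intro x
    constructor
    · intro hx b hb hxb
      have hmem : x ∈ ⋃₀ 𝓑' j := ⟨b, hb, hxb⟩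
      rw [(hcov j).2] at hmem; exact hmem hx
    · intro h
      by_contra hx
      have : x ∈ (Q.Rel j)ᶜ := hx
      rw [← (hcov j).2] at this
      obtain ⟨b, hb, hxb⟩ := this
      exact h b hb hxb
  rw [hRel, hRel]
  refine forall₂_congr fun b hb => not_congr ?_
  have hp : (j, b) ∈ ℬ := (memℬ (j, b)).2 hb
  have hbeq : b = {t | ∀ x ∈ Q.attr j, lop (j, b) x ≤ σ' x (t x) ∧ σ' x (t x) ≤ hip (j, b) x} :=
    hbox (j, b) hp
  rw [hbeq]
  simp only [Set.mem_setOf_eq]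
  have hAiff := key' A (σ' A a) (σ' A a') hge (j, b) hp hAj
  constructor <;> intro h x hx
  · by_cases hxA : x = A
    · subst hxA
      simp only [Function.update_self]
      have := h x hx
      simp only [Function.update_self] at this
      exact hAiff.mp this
    · have := h x hx
      rwa [Function.update_of_ne hxA] at this ⊢
  · by_cases hxA : x = A
    · subst hxA
      simp only [Function.update_self]
      have := h x hx
      simp only [Function.update_self] at this
      exact hAiff.mpr this
    · have := h x hx
      rwa [Function.update_of_ne hxA] at this ⊢

end helpers

/-- If there is some domain ordering under which `Q` has a box cover of total
size `K`, then under any domain ordering `σ` that places each `∼`-equivalence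
class of each attribute domain in a single consecutive run, every relation of
arity `n_i` has a box cover of size at most `(2K+1)^{n_i}`; hence `Q` has a box
cover of total size at most `m·(2K+1)^r`, where `r` bounds the arities. -/
theorem stmt11 [DecidableEq 𝒜] [∀ a, Fintype (D a)] (Q : Query 𝒜 D)
    (K r : ℕ) (hr : ∀ i, (Q.attr i).Finite ∧ (Q.attr i).ncard ≤ r)
    (hex : ∃ σ' : ∀ a, D a → ℕ, (∀ a, Function.Injective (σ' a)) ∧
      ∃ 𝓑', IsCover Q σ' 𝓑' ∧ (∀ i, (𝓑' i).Finite) ∧ ∑ i, (𝓑' i).ncard = K)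
    (σ : ∀ a, D a → ℕ) (hσ : ∀ a, Function.Injective (σ a))
    (hruns : ∀ (A : 𝒜) (a a' a'' : D A), σ A a ≤ σ A a' → σ A a' ≤ σ A a'' →
      HyperEq Q A a a'' → HyperEq Q A a a') :
    ∃ 𝓑, IsCover Q σ 𝓑 ∧ (∀ i, (𝓑 i).Finite) ∧
      (∀ i, (𝓑 i).ncard ≤ (2 * K + 1) ^ (Q.attr i).ncard) ∧
      ∑ i, (𝓑 i).ncard ≤ Q.m * (2 * K + 1) ^ r := by
  classical
  obtain ⟨σ', hσ'inj, 𝓑', hcov', hfin', hK⟩ := hex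
  obtain ⟨f, hf⟩ := class_count Q K σ' 𝓑' hcov' hfin' hK
  -- the image of each equivalence class under σ
  have hne : ∀ (A : 𝒜) (a : D A),
      ((Finset.univ.filter (fun a' => HyperEq Q A a a')).image (σ A)).Nonempty :=
    fun A a => ⟨σ A a, Finset.mem_image_of_mem _ (by simp [hyperEq_refl])⟩
  set lo : ∀ A : 𝒜, D A → ℕ := fun A a =>
    ((Finset.univ.filter (fun a' => HyperEq Q A a a')).image (σ A)).min' (hne A a) with hlo
  set hi : ∀ A : 𝒜, D A → ℕ := fun A a =>
    ((Finset.univ.filter (fun a' => HyperEq Q A a a')).image (σ A)).max' (hne A a) with hhi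
  have hcoord : ∀ (A : 𝒜) (a a' : D A),
      (lo A a ≤ σ A a' ∧ σ A a' ≤ hi A a) ↔ HyperEq Q A a a' := by
    intro A a a'
    constructor
    · rintro ⟨h1, h2⟩
      obtain ⟨amin, hminmem, hmin⟩ := Finset.mem_image.mp
        (((Finset.univ.filter (fun a' => HyperEq Q A a a')).image (σ A)).min'_mem (hne A a))
      obtain ⟨amax, hmaxmem, hmax⟩ := Finset.mem_image.mp
        (((Finset.univ.filter (fun a' => HyperEq Q A a a')).image (σ A)).max'_mem (hne A a))
      have e1 : HyperEq Q A a amin := (Finset.mem_filter.mp hminmem).2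
      have e2 : HyperEq Q A a amax := (Finset.mem_filter.mp hmaxmem).2
      have hstep := hruns A amin a' amax (by rw [hmin]; exact h1) (by rw [hmax]; exact h2)
        (hyperEq_trans Q (hyperEq_symm Q e1) e2)
      exact hyperEq_trans Q e1 hstep
    · intro h
      have hmem : σ A a' ∈ (Finset.univ.filter (fun a' => HyperEq Q A a a')).image (σ A) :=
        Finset.mem_image_of_mem _ (by simp [h])
      exact ⟨Finset.min'_le _ _ hmem, Finset.le_max' _ _ hmem⟩
  set cell : Fin Q.m → (∀ a, D a) → Set (∀ a, D a) :=
    fun i t => {t' | ∀ A ∈ Q.attr i, HyperEq Q A (t A) (t' A)} with hcell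
  set 𝓑 : Fin Q.m → Set (Set (∀ a, D a)) := fun i => cell i '' (Q.Rel i)ᶜ with h𝓑
  have hgap : ∀ i, ∀ t ∉ Q.Rel i, cell i t ∩ Q.Rel i = ∅ := by
    intro i t ht
    rw [Set.eq_empty_iff_forall_notMem]
    rintro t' ⟨hcm, hrel⟩
    have hiff : t ∈ Q.Rel i ↔ t' ∈ Q.Rel i := by
      refine rel_iff_of_hyperEq Q i (hr i).1.toFinset t t' (fun A hA => ?_) (fun A hA hA' => ?_)
      · exact hcm A ((hr i).1.mem_toFinset.mp hA)
      · exact absurd ((hr i).1.mem_toFinset.mpr hA) hA'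
    exact ht (hiff.mpr hrel)
  have hinj : ∀ i, ∃ φ : ↥(𝓑 i) → (↥(Q.attr i) → Fin (2 * K + 1)), Function.Injective φ := by
    intro i
    have hch : ∀ B : ↥(𝓑 i), ∃ t, t ∈ (Q.Rel i)ᶜ ∧ cell i t = (B : Set (∀ a, D a)) := fun B => B.2
    choose t ht1 ht2 using hch
    refine ⟨fun B => fun A => f A (t B A.1), ?_⟩
    intro B C hBC
    have hsim : ∀ A ∈ Q.attr i, HyperEq Q A (t B A) (t C A) := by
      intro A hA
      exact hf A _ _ (congrFun hBC ⟨A, hA⟩)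
    have hcc : cell i (t B) = cell i (t C) := by
      ext t'
      simp only [hcell, Set.mem_setOf_eq]
      exact forall₂_congr fun A hA =>
        ⟨fun h => hyperEq_trans Q (hyperEq_symm Q (hsim A hA)) h,
         fun h => hyperEq_trans Q (hsim A hA) h⟩
    exact Subtype.ext ((ht2 B).symm.trans (hcc.symm ▸ ht2 C))
  have hfinB : ∀ i, (𝓑 i).Finite := by
    intro i
    obtain ⟨φ, hφ⟩ := hinj i
    haveI := (hr i).1.to_subtype
    exact Set.finite_coe_iff.mp (Finite.of_injective φ hφ)
  have hcardB : ∀ i, (𝓑 i).ncard ≤ (2 * K + 1) ^ (Q.attr i).ncard := by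
    intro i
    obtain ⟨φ, hφ⟩ := hinj i
    haveI := (hr i).1.to_subtype
    haveI : Fintype ↥(Q.attr i) := (hr i).1.fintype
    calc (𝓑 i).ncard = Nat.card ↥(𝓑 i) := (Nat.card_coe_set_eq _).symm
      _ ≤ Nat.card (↥(Q.attr i) → Fin (2 * K + 1)) := Nat.card_le_card_of_injective φ hφ
      _ = (2 * K + 1) ^ (Q.attr i).ncard := by
          rw [Nat.card_eq_fintype_card, Fintype.card_fun]
          congr 1
          · exact Fintype.card_fin _
          · rw [← Nat.card_coe_set_eq, Nat.card_eq_fintype_card]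
  refine ⟨𝓑, ?_, hfinB, hcardB, ?_⟩
  · intro i
    constructor
    · rintro b ⟨s, hs, rfl⟩
      refine ⟨⟨fun A => lo A (s A), fun A => hi A (s A), ?_⟩, hgap i s hs⟩
      ext t'
      simp only [hcell, Set.mem_setOf_eq]
      exact forall₂_congr fun A hA => ((hcoord A (s A) (t' A)).symm : _)
    · ext t
      simp only [Set.mem_sUnion, Set.mem_compl_iff]
      constructor
      · rintro ⟨b, ⟨s, hs, rfl⟩, htb⟩ hrel
        have h := hgap i s hs
        rw [Set.eq_empty_iff_forall_notMem] at h
        exact h t ⟨htb, hrel⟩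
      · intro ht
        exact ⟨cell i t, ⟨t, ht, rfl⟩, fun A hA => hyperEq_refl Q A (t A)⟩
  · calc ∑ i, (𝓑 i).ncard ≤ ∑ _i : Fin Q.m, (2 * K + 1) ^ r :=
        Finset.sum_le_sum fun i _ => le_trans (hcardB i)
          (Nat.pow_le_pow_right (by omega) (hr i).2)
      _ = Q.m * (2 * K + 1) ^ r := by
        rw [Finset.sum_const, Finset.card_univ, Fintype.card_fin, smul_eq_mul]
end

section
/- Let R ⊆ {0,…,2^d−1}^n be a finite relation and let B be a maximal dyadic box cover index of R (a set of dyadic gap boxes containing every maximal dyadic gap box). Let t ∉ R and R' = R ∪ {t}. Then the set B' obtained by removing from B every box containing t, and adding, for every dyadic box b' with t ∈ b' ⊆ b for some removed b ∈ B and every coordinate A with prefix length |b'.A| < d, the box obtained from b' by appending to b'.A the one bit that excludes t, is again a set of dyadic gap boxes of R' containing every maximal dyadic gap box of R'. -/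
/-- The set of `n`-tuples of `d`-bit strings lying in the dyadic box given by
the `n`-tuple of binary prefixes `b`. -/
def BoxSet (n d : ℕ) (b : Fin n → List Bool) : Set (Fin n → List Bool) :=
  {w | ∀ i, (w i).length = d ∧ b i <+: w i}

/-- `b` is a dyadic gap box of `R`. -/
def IsGap (n d : ℕ) (R : Set (Fin n → List Bool)) (b : Fin n → List Bool) : Prop :=
  (∀ i, (b i).length ≤ d) ∧ BoxSet n d b ∩ R = ∅

/-- `b` is a maximal dyadic gap box of `R`: deleting the last bit of any
nonempty coordinate prefix yields a box intersecting `R`. -/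
def IsMaxGap (n d : ℕ) (R : Set (Fin n → List Bool)) (b : Fin n → List Bool) : Prop :=
  IsGap n d R b ∧
    ∀ A : Fin n, b A ≠ [] →
      ∃ w ∈ R, w ∈ BoxSet n d (Function.update b A (b A).dropLast)

/-- The updated index after inserting `t`: keep the boxes of `B` not
containing `t`, and for every dyadic box `b'` with `t ∈ b' ⊆ b` for some
removed `b ∈ B` and every coordinate `A` with `|b'.A| < d`, add the box
obtained from `b'` by appending to `b'.A` the one bit that excludes `t`. -/
def insertMDBCI (n d : ℕ) (B : Set (Fin n → List Bool))
    (t : Fin n → List Bool) : Set (Fin n → List Bool) :=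
  {b ∈ B | t ∉ BoxSet n d b} ∪
  {b'' | ∃ b ∈ B, t ∈ BoxSet n d b ∧
    ∃ b' : Fin n → List Bool, t ∈ BoxSet n d b' ∧ (∀ i, (b' i).length ≤ d) ∧
      BoxSet n d b' ⊆ BoxSet n d b ∧
      ∃ A : Fin n, (b' A).length < d ∧
        b'' = Function.update b' A
          ((b' A) ++ [!((t A).getD (b' A).length false)])}

/-- If `l` is a proper prefix of `w`, appending the next bit of `w` keeps it a prefix. -/
lemma prefix_append_next {l w : List Bool} (h : l <+: w) (hlt : l.length < w.length) :
    l ++ [w[l.length]] <+: w := by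
  rw [List.prefix_iff_eq_take] at h ⊢
  rw [List.length_append, List.length_singleton, List.take_succ, ← h,
    List.getElem?_eq_getElem hlt]
  rfl

lemma boxSet_mono {n d : ℕ} {b c : Fin n → List Bool} (h : ∀ i, c i <+: b i) :
    BoxSet n d b ⊆ BoxSet n d c := by
  intro w hw i
  exact ⟨(hw i).1, (h i).trans (hw i).2⟩

/-- Every gap box is contained in a maximal gap box. -/
lemma exists_maxGap {n d : ℕ} {R : Set (Fin n → List Bool)} :
    ∀ N (b : Fin n → List Bool), (∑ i, (b i).length) ≤ N → IsGap n d R b →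
      ∃ c, IsMaxGap n d R c ∧ ∀ i, c i <+: b i := by
  intro N
  induction N with
  | zero =>
    intro b hN hb
    refine ⟨b, ⟨hb, fun A hA => absurd ?_ hA⟩, fun i => List.prefix_refl _⟩
    have := Finset.sum_eq_zero_iff.mp (Nat.le_zero.mp hN) A (Finset.mem_univ A)
    exact List.eq_nil_of_length_eq_zero this
  | succ N ih =>
    intro b hN hb
    by_cases hmax : ∀ A : Fin n, b A ≠ [] →
        ∃ w ∈ R, w ∈ BoxSet n d (Function.update b A (b A).dropLast)
    · exact ⟨b, ⟨hb, hmax⟩, fun i => List.prefix_refl _⟩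
    · push_neg at hmax
      obtain ⟨A, hA, hno⟩ := hmax
      set b2 := Function.update b A (b A).dropLast with hb2
      have hpre : ∀ i, b2 i <+: b i := by
        intro i
        by_cases hi : i = A
        · subst hi; simp [hb2, List.dropLast_prefix]
        · simp [hb2, Function.update_of_ne hi]
      have hgap2 : IsGap n d R b2 := by
        refine ⟨fun i => (hpre i).length_le.trans (hb.1 i), ?_⟩
        rw [Set.eq_empty_iff_forall_notMem]
        rintro w ⟨hw1, hw2⟩
        exact hno w hw2 hw1
      have hsum : (∑ i, (b2 i).length) ≤ N := by
        have h1 : (b2 A).length < (b A).length := by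
          simp only [hb2, Function.update_self, List.length_dropLast]
          exact Nat.sub_lt (List.length_pos_iff.mpr hA) one_pos
        have h2 : (∑ i, (b2 i).length) < ∑ i, (b i).length := by
          apply Finset.sum_lt_sum (fun i _ => (hpre i).length_le)
          exact ⟨A, Finset.mem_univ A, h1⟩
        omega
      obtain ⟨c, hc, hcpre⟩ := ih b2 hsum hgap2
      exact ⟨c, hc, fun i => (hcpre i).trans (hpre i)⟩

/-- If `B` is a maximal dyadic box cover index of `R` (a set of dyadic gap
boxes containing every maximal dyadic gap box) and `t ∉ R`, then the updated
set `insertMDBCI n d B t` is a set of dyadic gap boxes of `R' = R ∪ {t}`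
containing every maximal dyadic gap box of `R'`. -/
theorem stmt19 (n d : ℕ) (hn : 1 ≤ n) (hd : 1 ≤ d)
    (R : Set (Fin n → List Bool)) (hRfin : R.Finite)
    (hRw : ∀ w ∈ R, ∀ i, (w i).length = d)
    (t : Fin n → List Bool) (ht : ∀ i, (t i).length = d) (htR : t ∉ R)
    (B : Set (Fin n → List Bool))
    (hBgap : ∀ b ∈ B, IsGap n d R b)
    (hBmax : ∀ b, IsMaxGap n d R b → b ∈ B) :
    (∀ b ∈ insertMDBCI n d B t, IsGap n d (R ∪ {t}) b) ∧
    (∀ b, IsMaxGap n d (R ∪ {t}) b → b ∈ insertMDBCI n d B t) := by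
  constructor
  · rintro b (⟨hbB, hbt⟩ | ⟨b0, hb0B, hb0t, b', htb', hb'len, hb'sub, A, hAlt, rfl⟩)
    · refine ⟨(hBgap b hbB).1, ?_⟩
      rw [Set.eq_empty_iff_forall_notMem]
      rintro w ⟨hw1, hw2 | hw2⟩
      · exact Set.eq_empty_iff_forall_notMem.mp (hBgap b hbB).2 w ⟨hw1, hw2⟩
      · exact hbt (hw2 ▸ hw1)
    · set c : Bool := (t A).getD (b' A).length false with hc
      set b'' := Function.update b' A (b' A ++ [!c]) with hb''
      have hb''pre : ∀ i, b' i <+: b'' i := by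
        intro i
        by_cases hi : i = A
        · subst hi; simp [hb'', List.prefix_append]
        · simp [hb'', Function.update_of_ne hi]
      have hsub : BoxSet n d b'' ⊆ BoxSet n d b' := boxSet_mono hb''pre
      refine ⟨?_, ?_⟩
      · intro i
        by_cases hi : i = A
        · subst hi; simp only [hb'', Function.update_self, List.length_append,
            List.length_singleton]; omega
        · simpa [hb'', Function.update_of_ne hi] using hb'len i
      · rw [Set.eq_empty_iff_forall_notMem]
        rintro w ⟨hw1, hw2 | hw2⟩
        · exact Set.eq_empty_iff_forall_notMem.mp (hBgap b0 hb0B).2 w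
            ⟨hb'sub (hsub hw1), hw2⟩
        · -- w = t; show t ∉ BoxSet b''
          rw [Set.mem_singleton_iff] at hw2
          subst hw2
          have hp : b' A ++ [!c] <+: w A := by
            have := (hw1 A).2
            simpa [hb''] using this
          have hlt' : (b' A).length < (w A).length := by rw [ht A]; exact hAlt
          have h1 : (b' A ++ [!c])[(b' A).length]'(by simp) = (w A)[(b' A).length] :=
            hp.getElem (by simp)
          rw [List.getElem_concat_length rfl] at h1
          have h2 : c = (w A)[(b' A).length] := by
            rw [hc, List.getD_eq_getElem _ _ hlt']
          rw [← h2] at h1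
          simp at h1
  · intro b hb
    obtain ⟨⟨hblen, hbgap'⟩, hbmax'⟩ := hb
    have hbgapR : BoxSet n d b ∩ R = ∅ := by
      rw [Set.eq_empty_iff_forall_notMem] at hbgap' ⊢
      exact fun w hw => hbgap' w ⟨hw.1, Or.inl hw.2⟩
    have htb : t ∉ BoxSet n d b := fun h =>
      Set.eq_empty_iff_forall_notMem.mp hbgap' t ⟨h, Or.inr rfl⟩
    by_cases hcase : ∀ A : Fin n, b A ≠ [] →
        ∃ w ∈ R, w ∈ BoxSet n d (Function.update b A (b A).dropLast)
    · exact Or.inl ⟨hBmax b ⟨⟨hblen, hbgapR⟩, hcase⟩, htb⟩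
    · push_neg at hcase
      obtain ⟨A, hA, hno⟩ := hcase
      set b' := Function.update b A (b A).dropLast with hb'
      obtain ⟨w, hwR', hwbox⟩ := hbmax' A hA
      have hwt : w = t := by
        rcases hwR' with hwR | hwt
        · exact absurd hwbox (hno w hwR)
        · exact hwt
      rw [hwt] at hwbox
      clear hwR'
      -- t ∈ BoxSet n d b'
      have hb'pre : ∀ i, b' i <+: b i := by
        intro i
        by_cases hi : i = A
        · subst hi; simp [hb', List.dropLast_prefix]
        · simp [hb', Function.update_of_ne hi]
      have hb'len : ∀ i, (b' i).length ≤ d := fun i => (hb'pre i).length_le.trans (hblen i)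
      have hb'gap : IsGap n d R b' := by
        refine ⟨hb'len, ?_⟩
        rw [Set.eq_empty_iff_forall_notMem]
        rintro w ⟨hw1, hw2⟩
        exact hno w hw2 hw1
      obtain ⟨chat, hchat, hchatpre⟩ :=
        exists_maxGap (R := R) (∑ i, (b' i).length) b' le_rfl hb'gap
      have hchatB : chat ∈ B := hBmax chat hchat
      have htchat : t ∈ BoxSet n d chat := boxSet_mono hchatpre hwbox
      refine Or.inr ⟨chat, hchatB, htchat, b', hwbox, hb'len, boxSet_mono hchatpre, A, ?_, ?_⟩
      · -- (b' A).length < d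
        have : (b' A).length < (b A).length := by
          simp only [hb', Function.update_self, List.length_dropLast]
          exact Nat.sub_lt (List.length_pos_iff.mpr hA) one_pos
        exact this.trans_le (hblen A)
      · -- b = update b' A (b' A ++ [!c])
        set c : Bool := (t A).getD (b' A).length false with hc
        have hlast : (b A).getLast hA = !c := by
          have hlt' : (b' A).length < (t A).length := by
            rw [ht A]
            have : (b' A).length < (b A).length := by
              simp only [hb', Function.update_self, List.length_dropLast]
              exact Nat.sub_lt (List.length_pos_iff.mpr hA) one_pos
            exact this.trans_le (hblen A)
          have hcval : c = (t A)[(b' A).length] := by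
            rw [hc, List.getD_eq_getElem _ _ hlt']
          by_contra hne
          have heq : (b A).getLast hA = c := by
            cases h1 : (b A).getLast hA <;> cases h2 : c <;> simp_all
          -- then t ∈ BoxSet b, contradiction
          apply htb
          intro i
          refine ⟨ht i, ?_⟩
          by_cases hi : i = A
          · subst hi
            have hpre : b' i <+: t i := (hwbox i).2
            have : b' i ++ [(t i)[(b' i).length]] <+: t i := prefix_append_next hpre hlt'
            rw [← hcval, ← heq] at this
            have hba : b i = b' i ++ [(b i).getLast hA] := by
              simp only [hb', Function.update_self]
              exact (List.dropLast_append_getLast hA).symm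
            rw [hba]
            exact this
          · have := (hwbox i).2
            rwa [Function.update_of_ne hi] at this
        rw [← hlast, hb', Function.update_idem, Function.update_self]
        rw [show (b A).dropLast ++ [(b A).getLast hA] = b A from List.dropLast_append_getLast hA]
        exact (Function.update_eq_self A b).symm
end
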